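/- The map M_{n,d} sending a standard Young tableau τ of hook shape (d, 1^{n-d}) to the path γ_1γ_2...γ_n with γ_n = NE, γ_{n-i} = NE if i ∈ Des(τ) and γ_{n-i} = D otherwise, is a bijection from SYT(d,1^{n-d}) to the set of Schröder paths in an n×n grid with d-1 diagonal steps, area 0, and ending in NE. Moreover maj(τ) = bounce(M_{n,d}(τ)). -/

import Mathlib

open scoped Classical

inductive Step : Type
  | N | E | D
deriving DecidableEq, Repr

instance : Fintype Step :=
  ⟨{Step.N, Step.E, Step.D}, by intro x; cases x <;> simp⟩

open Step

/-- number of occurrences of the letter `s` in the word `w` -/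
def cnt (s : Step) (w : List Step) : ℕ := w.count s

/-- Schröder (or Dyck, if no `D`s) path in an `n × n` grid: every prefix has at
least as many `N`s as `E`s, and the totals agree. -/
def IsSchroeder (w : List Step) : Prop :=
  (∀ p : List Step, p <+: w → cnt E p ≤ cnt N p) ∧ cnt N w = cnt E w

/-- words that are concatenations of blocks `NE` and `D` -/
inductive IsNED : List Step → Prop
  | nil : IsNED []
  | ne {w} : IsNED w → IsNED (N :: E :: w)
  | d {w} : IsNED w → IsNED (D :: w)

/-- area of a Schröder path: the number of lower triangles between the path and the
main diagonal, computed as the sum over `N` and `D` steps of the height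
`#N - #E` of the starting point of the step above the diagonal. -/
def areaAux : ℕ → List Step → ℕ
  | _, [] => 0
  | h, N :: w => h + areaAux (h+1) w
  | h, D :: w => h + areaAux h w
  | h, E :: w => areaAux (h-1) w

def area (w : List Step) : ℕ := areaAux 0 w

/-- area of an `N/E` lattice path in a rectangular grid: the number of boxes under
the path, i.e. the sum over `E` steps of the number of `N` steps before it. -/
def areaNEAux : ℕ → List Step → ℕ
  | _, [] => 0
  | h, N :: w => areaNEAux (h+1) w
  | h, E :: w => h + areaNEAux h w
  | h, D :: w => areaNEAux h w

def areaNE (w : List Step) : ℕ := areaNEAux 0 w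

/-- number of `N`s occurring before the `(j+1)`-st `E` (`j` is 0-indexed);
this is the height of the path above the horizontal interval `[j, j+1]`. -/
def nBefore : List Step → ℕ → ℕ
  | [], _ => 0
  | N :: w, j => 1 + nBefore w j
  | E :: w, j => if j = 0 then 0 else nBefore w (j-1)
  | D :: w, j => nBefore w j

/-- number of `E`s occurring before the `(i+1)`-st `N` (`i` is 0-indexed). -/
def eBefore : List Step → ℕ → ℕ
  | [], _ => 0
  | E :: w, i => 1 + eBefore w i
  | N :: w, i => if i = 0 then 0 else eBefore w (i-1)
  | D :: w, i => eBefore w i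

/-- number of `D`s occurring after the `e`-th `E` (`e` is 1-indexed). -/
def dAfterE : List Step → ℕ → ℕ
  | [], _ => 0
  | E :: w, e => if e ≤ 1 then cnt D w else dAfterE w (e-1)
  | D :: w, e => dAfterE w e
  | N :: w, e => dAfterE w e

/-- Combined computation of `bounce(Γ(γ)) + numph(γ)` along the bounce path of
`Γ(γ)`.  Here `g` is the Schröder path, `w = Γ(g)` is the underlying Dyck path,
`nn` its size; the bounce path has corners (peaks) at the positions
`j₀ = 0, jₖ₊₁ = nBefore w jₖ`; each intermediate return `jₖ₊₁ < nn` contributes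
`nn - jₖ₊₁` to the bounce of `Γ(g)`, and the peak with corner at `jₖ` is the start
of the `(jₖ+1)`-st east step, contributing to numph the number of diagonal steps of
`g` above it, i.e. after that east step. -/
def bounceAux (g w : List Step) (nn : ℕ) : ℕ → ℕ → ℕ
  | 0, _ => 0
  | fuel+1, j =>
      dAfterE g (j+1) +
        (if nn ≤ nBefore w j ∨ nBefore w j ≤ j then 0
         else (nn - nBefore w j) + bounceAux g w nn fuel (nBefore w j))

/-- the bounce statistic of a Schröder path: `bounce(Γ(γ)) + numph(γ)` -/
def bounce (g : List Step) : ℕ :=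
  let w := g.filter (fun s => s ≠ D)
  let nn := cnt E w
  if nn = 0 then 0 else bounceAux g w nn g.length 0

/-- the (signed) area coordinate `a_i = m·i - (#E before the (i+1)-st N)` of line `i`
(0-indexed) for a path in an `n × mn` grid. -/
def aLine (m : ℕ) (g : List Step) (i : ℕ) : ℤ := (m : ℤ) * i - eBefore g i

/-- an `(n, mn)`-Dyck path: `n` north steps, `mn` east steps, no diagonal steps,
staying weakly above the main diagonal. -/
def IsParkingPath (n m : ℕ) (g : List Step) : Prop :=
  (∀ s ∈ g, s ≠ D) ∧ cnt N g = n ∧ cnt E g = m * n ∧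
    ∀ p : List Step, p <+: g → cnt E p ≤ m * cnt N p

/-- an `(n, mn)`-parking function: an `(n,mn)`-Dyck path labelled by a permutation
`w` of `{0, …, n-1}` whose labels increase within each column. -/
def IsParking (n m : ℕ) (g : List Step) (w : Fin n → Fin n) : Prop :=
  IsParkingPath n m g ∧ Function.Bijective w ∧
    ∀ i j : Fin n, (j : ℕ) = (i : ℕ) + 1 → eBefore g (i : ℕ) = eBefore g (j : ℕ) → w i < w j

/-- the diagonal inversion statistic of an `(n, mn)`-parking function -/
def dinv (n m : ℕ) (g : List Step) (w : Fin n → Fin n) : ℤ :=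
  ∑ i : Fin n, ∑ j : Fin n,
    if (i : ℕ) < (j : ℕ) then
      (if w i < w j then max 0 ((m : ℤ) - |aLine m g (i : ℕ) - aLine m g (j : ℕ)|) else 0) +
        (if w j < w i then max 0 ((m : ℤ) - |aLine m g (j : ℕ) - aLine m g (i : ℕ) + 1|) else 0)
    else 0

/-- the number of descents of the word `w` -/
def desNum (n : ℕ) (w : Fin n → Fin n) : ℕ :=
  ((Finset.range (n-1)).filter fun i =>
    ∃ hj : i + 1 < n, w ⟨i+1, hj⟩ < w ⟨i, Nat.lt_of_succ_lt hj⟩).card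

/-- the major index of the word `w` (with positions 1-indexed as usual) -/
def majStat (n : ℕ) (w : Fin n → Fin n) : ℕ :=
  ∑ i ∈ (Finset.range (n-1)).filter (fun i =>
    ∃ hj : i + 1 < n, w ⟨i+1, hj⟩ < w ⟨i, Nat.lt_of_succ_lt hj⟩), (i+1)

/-- the reading word of a labelled path in an `n × mn` grid: labels are read along
diagonals parallel to the main diagonal, starting with the farthest diagonal,
each diagonal being read from top-right to bottom-left. -/
def readWord (n m : ℕ) (g : List Step) (lab : ℕ → ℕ) : List ℕ :=
  ((List.range (m * n + 1)).map fun k =>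
    (((List.range n).reverse.filter fun i => aLine m g i = (m * n : ℤ) - k).map lab)).flatten

/-- the labelling function `ℕ → ℕ` associated to a permutation of `Fin n` -/
def labOf {n : ℕ} (w : Fin n → Fin n) : ℕ → ℕ :=
  fun i => if h : i < n then (w ⟨i, h⟩ : ℕ) else 0

/-- one step of the algorithm `φ`, on the reversed word: find the rightmost
(i.e. first in the reversed word) east step not followed by an east step,
and swap it with the letter following it. -/
def phiRevAux : List Step → List Step
  | a :: E :: t => if a ≠ E then E :: a :: t else a :: phiRevAux (E :: t)
  | a :: t => a :: phiRevAux t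
  | [] => []

/-- one step of the algorithm `φ` -/
def phiStep (w : List Step) : List Step := (phiRevAux w.reverse).reverse

/-- the sequence `φ(γ) = (γ₀, γ₁, …, γ_{bounce γ})` produced by the algorithm -/
def phiSeq (g : List Step) : List (List Step) :=
  (List.range (bounce g + 1)).map fun i => phiStep^[i] g

/-- the union of all sequences `φ(γ)` over area-0 Schröder paths with `n` blocks -/
def phiUniv (n : ℕ) : Set (List Step) :=
  {p | ∃ g, IsNED g ∧ cnt N g + cnt D g = n ∧ p ∈ phiSeq g}

/-- the map replacing each block `NE` by `N` and each `D` by `E` -/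
def theta : List Step → List Step
  | N :: E :: w => N :: theta w
  | D :: w => E :: theta w
  | _ :: w => theta w
  | [] => []

/-- the cells of the hook-shaped Young diagram `(d, 1^{n-d})` (row 0 is the arm). -/
def hookCells (n d : ℕ) : Finset (ℕ × ℕ) :=
  ((Finset.range d).image fun c => ((0 : ℕ), c)) ∪
    ((Finset.range (n - d + 1)).image fun r => (r, (0 : ℕ)))

/-- a standard Young tableau of hook shape `(d, 1^{n-d})`: `pos i` is the cell
`(row, column)` containing the entry `i+1`; entries increase along rows and columns. -/
structure HookSYT (n d : ℕ) where
  pos : Fin n → ℕ × ℕ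
  mem : ∀ i, pos i ∈ hookCells n d
  inj : Function.Injective pos
  rowInc : ∀ i j : Fin n, (pos i).1 = (pos j).1 → (pos i).2 < (pos j).2 → i < j
  colInc : ∀ i j : Fin n, (pos i).2 = (pos j).2 → (pos i).1 < (pos j).1 → i < j

/-- the descent set of a standard Young tableau: entries `i ∈ {1, …, n-1}` such that
the entry `i+1` lies in a strictly higher row than `i`. -/
def Des {n d : ℕ} (τ : HookSYT n d) : Finset ℕ :=
  (Finset.Icc 1 (n-1)).filter fun i =>
    ∃ hi : i < n, ∃ hi' : i - 1 < n, (τ.pos ⟨i - 1, hi'⟩).1 < (τ.pos ⟨i, hi⟩).1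

/-- the major index of a standard Young tableau -/
def majT {n d : ℕ} (τ : HookSYT n d) : ℕ := ∑ i ∈ Des τ, i

/-- the number of descents of a standard Young tableau -/
def desT {n d : ℕ} (τ : HookSYT n d) : ℕ := (Des τ).card

/-- the maximum of the descent set -/
def maxDes {n d : ℕ} (τ : HookSYT n d) : ℕ := (Des τ).sup id

/-- the map `M_{n,d}`: the path `γ₁γ₂⋯γₙ` with `γₙ = NE`, `γ_{n-i} = NE` if
`i ∈ Des τ` and `γ_{n-i} = D` otherwise -/
def Mmap (n d : ℕ) (τ : HookSYT n d) : List Step :=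
  (((List.range n).map fun j =>
    if j = n - 1 then [N, E]
    else if (n - 1 - j) ∈ Des τ then [N, E] else [D])).flatten

/-- the map `S_{n,d}`: the path `γ₁⋯γ_{n-1}` with `γ_{n-i} = NNEE` if
`i = max Des τ` and `1 ∈ Des τ`, `γ_{n-i} = NDE` if `i = max Des τ` and
`1 ∉ Des τ`, `γ_{n-i} = NE` if `i = 1` or `i ∈ Des τ ∖ {max Des τ}`, and
`γ_{n-i} = D` otherwise. -/
def Smap (n d : ℕ) (τ : HookSYT n d) : List Step :=
  (((List.range (n-1)).map fun j =>
    if (n - 1 - j) = maxDes τ then (if 1 ∈ Des τ then [N,N,E,E] else [N,D,E])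
    else if (n - 1 - j) = 1 ∨ (n - 1 - j) ∈ Des τ then [N,E] else [D])).flatten

/-- the set `V_{n,d}` of Schröder paths of the form `Dʲ NNEE u` or `Dʲ NDE u`
with `u ∈ {NE,D}* NE`, having `n-d+1` north steps and `d-1` diagonal steps. -/
def Vset (n d : ℕ) : Set (List Step) :=
  {g | (∃ j u, IsNED u ∧
      (g = List.replicate j D ++ [N,N,E,E] ++ (u ++ [N,E]) ∨
       g = List.replicate j D ++ [N,D,E] ++ (u ++ [N,E]))) ∧
     cnt N g = n - d + 1 ∧ cnt D g = d - 1}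

/-- Schröder paths in an `n × n` grid with `dd` diagonal steps, area `a`,
ending with `NE` -/
def SchT (n dd a : ℕ) : Set (List Step) :=
  {g | IsSchroeder g ∧ cnt D g = dd ∧ cnt N g = n - dd ∧ area g = a ∧ ∃ u, g = u ++ [N, E]}

/-- the 'upper' forms: `Dʲ NNEE γ' NE NE` or `γ' NE Dʲ NNEE γ''` -/
def UpperForm (g : List Step) : Prop :=
  (∃ j u, IsNED u ∧ g = List.replicate j D ++ [N,N,E,E] ++ u ++ [N,E,N,E]) ∨
  (∃ u j v, IsNED u ∧ g = u ++ [N,E] ++ List.replicate j D ++ [N,N,E,E] ++ v)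

/-- the 'lower' forms: `Dʲ NNEE γ' D NE` or `γ' NDE Dʲ NE γ''` -/
def LowerForm (g : List Step) : Prop :=
  (∃ j u, IsNED u ∧ g = List.replicate j D ++ [N,N,E,E] ++ u ++ [D,N,E]) ∨
  (∃ u j v, IsNED u ∧ g = u ++ [N,D,E] ++ List.replicate j D ++ [N,E] ++ v)

/-- the number of distinct columns of the path -/
def Tcols (n : ℕ) (g : List Step) : ℕ :=
  ((Finset.range n).image fun i => eBefore g i).card

/-- the `q`-integer `[k]_q = 1 + q + ⋯ + q^{k-1}` as a polynomial -/
noncomputable def qInt (k : ℕ) : Polynomial ℤ := ∑ i ∈ Finset.range k, Polynomial.X ^ i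

/-- the `q`-factorial `[k]!_q` -/
noncomputable def qFact (k : ℕ) : Polynomial ℤ := ∏ i ∈ Finset.range k, qInt (i+1)

/-! ### Auxiliary development -/

/-- encode a list of blocks: `true ↦ NE`, `false ↦ D` -/
def toWord : List Bool → List Step
  | [] => []
  | true :: l => N :: E :: toWord l
  | false :: l => D :: toWord l

@[simp] lemma toWord_nil : toWord [] = [] := rfl
@[simp] lemma toWord_true (l : List Bool) : toWord (true :: l) = N :: E :: toWord l := rfl
@[simp] lemma toWord_false (l : List Bool) : toWord (false :: l) = D :: toWord l := rfl

lemma toWord_append (a b : List Bool) : toWord (a ++ b) = toWord a ++ toWord b := by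
  induction a with
  | nil => rfl
  | cons x l ih => cases x <;> simp [ih]

lemma toWord_inj : ∀ {a b : List Bool}, toWord a = toWord b → a = b
  | [], [], _ => rfl
  | [], true :: l, h => by simp at h
  | [], false :: l, h => by simp at h
  | true :: l, [], h => by simp at h
  | false :: l, [], h => by simp at h
  | true :: l, true :: m, h => by
      simp only [toWord_true, List.cons.injEq] at h
      rw [toWord_inj h.2.2]
  | true :: l, false :: m, h => by simp at h
  | false :: l, true :: m, h => by simp at h
  | false :: l, false :: m, h => by
      simp only [toWord_false, List.cons.injEq] at h
      rw [toWord_inj h.2]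

@[simp] lemma cntN_toWord (b : List Bool) : cnt N (toWord b) = b.count true := by
  induction b with
  | nil => rfl
  | cons x l ih => cases x <;> simp [cnt, List.count_cons, ih, cnt] <;> simp [cnt] at ih <;> omega

@[simp] lemma cntE_toWord (b : List Bool) : cnt E (toWord b) = b.count true := by
  induction b with
  | nil => rfl
  | cons x l ih => cases x <;> simp [cnt, List.count_cons, ih, cnt] <;> simp [cnt] at ih <;> omega

@[simp] lemma cntD_toWord (b : List Bool) : cnt D (toWord b) = b.count false := by
  induction b with
  | nil => rfl
  | cons x l ih => cases x <;> simp [cnt, List.count_cons, ih, cnt] <;> simp [cnt] at ih <;> omega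

lemma length_toWord (b : List Bool) : b.length ≤ (toWord b).length := by
  induction b with
  | nil => simp
  | cons x l ih => cases x <;> simp [ih] <;> omega

lemma count_true_add_count_false (b : List Bool) : b.count true + b.count false = b.length := by
  induction b with
  | nil => rfl
  | cons x l ih => cases x <;> simp [List.count_cons] <;> omega

lemma areaAux_toWord (b : List Bool) : areaAux 0 (toWord b) = 0 := by
  induction b with
  | nil => rfl
  | cons x l ih => cases x <;> simpa [areaAux] using ih

lemma prefix_toWord_count : ∀ (b : List Bool) (p : List Step), p <+: toWord b →
    cnt E p ≤ cnt N p := by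
  intro b
  induction b with
  | nil => intro p hp; simp [List.prefix_nil] at hp; simp [hp, cnt]
  | cons x l ih =>
    cases x with
    | true =>
      intro p hp
      rcases p with _ | ⟨s, p⟩
      · simp [cnt]
      · rw [toWord_true, List.cons_prefix_cons] at hp
        obtain ⟨rfl, hp⟩ := hp
        rcases p with _ | ⟨s, p⟩
        · simp [cnt]
        · rw [List.cons_prefix_cons] at hp
          obtain ⟨rfl, hp⟩ := hp
          have := ih p hp
          simp [cnt, List.count_cons] at this ⊢
          omega
    | false =>
      intro p hp
      rcases p with _ | ⟨s, p⟩
      · simp [cnt]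
      · rw [toWord_false, List.cons_prefix_cons] at hp
        obtain ⟨rfl, hp⟩ := hp
        have := ih p hp
        simp [cnt, List.count_cons] at this ⊢
        omega

lemma isSchroeder_toWord (b : List Bool) : IsSchroeder (toWord b) := by
  exact ⟨prefix_toWord_count b, by simp⟩

lemma exists_toWord_of_schroeder : ∀ (k : ℕ) (g : List Step), g.length ≤ k →
    IsSchroeder g → area g = 0 → ∃ b, toWord b = g := by
  intro k
  induction k with
  | zero =>
    intro g hg _ _
    interval_cases h : g.length
    · exact ⟨[], by simpa using (List.length_eq_zero_iff.mp h).symm⟩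
  | succ k ih =>
    intro g hg hs ha
    match g with
    | [] => exact ⟨[], rfl⟩
    | E :: w =>
      exact absurd (hs.1 [E] ⟨w, rfl⟩) (by simp [cnt])
    | D :: w =>
      have hw : IsSchroeder w := by
        constructor
        · intro p hp
          have := hs.1 (D :: p) (by simpa using hp)
          simpa [cnt, List.count_cons] using this
        · have := hs.2; simpa [cnt, List.count_cons] using this
      have haw : area w = 0 := by simpa [area, areaAux] using ha
      obtain ⟨b, hb⟩ := ih w (by simp only [List.length_cons] at hg; omega) hw haw
      exact ⟨false :: b, by simp [hb]⟩
    | [N] =>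
      have := hs.2; simp [cnt] at this
    | N :: N :: w =>
      exfalso; simp [area, areaAux] at ha
    | N :: D :: w =>
      exfalso; simp [area, areaAux] at ha
    | N :: E :: w =>
      have hw : IsSchroeder w := by
        constructor
        · intro p hp
          have := hs.1 (N :: E :: p) (by simpa using hp)
          simpa [cnt, List.count_cons] using this
        · have := hs.2; simp [cnt, List.count_cons] at this ⊢; omega
      have haw : area w = 0 := by simpa [area, areaAux] using ha
      obtain ⟨b, hb⟩ := ih w (by simp only [List.length_cons] at hg; omega) hw haw
      exact ⟨true :: b, by simp [hb]⟩

/-! ### bounce computation -/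

def neWord (k : ℕ) : List Step := toWord (List.replicate k true)

@[simp] lemma neWord_zero : neWord 0 = [] := rfl
@[simp] lemma neWord_succ (k : ℕ) : neWord (k+1) = N :: E :: neWord k := rfl

lemma filter_toWord (b : List Bool) :
    (toWord b).filter (fun s => s ≠ D) = neWord (b.count true) := by
  induction b with
  | nil => rfl
  | cons x l ih =>
    cases x
    · rw [toWord_false, List.filter_cons_of_neg (by simp)]
      simpa [List.count_cons] using ih
    · rw [toWord_true, List.filter_cons_of_pos (by simp), List.filter_cons_of_pos (by simp)]
      simpa [List.count_cons] using ih

@[simp] lemma cntE_neWord (k : ℕ) : cnt E (neWord k) = k := by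
  simp [neWord]

lemma nBefore_neWord (k j : ℕ) : nBefore (neWord k) j = min (j+1) k := by
  induction k generalizing j with
  | zero => simp [nBefore]
  | succ k ih =>
    rcases Nat.eq_zero_or_pos j with rfl | hj
    · simp [nBefore]
    · rw [neWord_succ]
      have hj0 : j ≠ 0 := by omega
      simp only [nBefore, if_neg hj0, ih]
      omega

/-- number of `false`s after the `e`-th `true` (1-indexed) in a block list -/
def dAfter : List Bool → ℕ → ℕ
  | [], _ => 0
  | true :: l, e => if e ≤ 1 then l.count false else dAfter l (e-1)
  | false :: l, e => dAfter l e

lemma dAfterE_toWord (b : List Bool) (e : ℕ) : dAfterE (toWord b) e = dAfter b e := by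
  induction b generalizing e with
  | nil => rfl
  | cons x l ih => cases x <;> simp [dAfterE, dAfter, ih]

lemma bounceAux_toWord (b : List Bool) :
    ∀ (fuel j : ℕ), j < b.count true → b.count true ≤ j + fuel →
    bounceAux (toWord b) (neWord (b.count true)) (b.count true) fuel j =
      (∑ t ∈ Finset.Ico j (b.count true), dAfter b (t+1)) +
      (∑ t ∈ Finset.Ico (j+1) (b.count true), (b.count true - t)) := by
  intro fuel
  set nn := b.count true with hnn
  induction fuel with
  | zero => intro j h1 h2; omega
  | succ fuel ih =>
    intro j h1 h2
    have hnb : nBefore (neWord nn) j = j + 1 := by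
      rw [nBefore_neWord]; omega
    rw [bounceAux, hnb, dAfterE_toWord]
    rcases Nat.lt_or_ge (j+1) nn with h | h
    · rw [if_neg (by omega), ih (j+1) h (by omega)]
      rw [Finset.sum_eq_sum_Ico_succ_bot h1 (fun t => dAfter b (t+1)),
        Finset.sum_eq_sum_Ico_succ_bot h (fun t => nn - t)]
      omega
    · have hj1 : j + 1 = nn := by omega
      rw [if_pos (by omega)]
      rw [Finset.sum_eq_sum_Ico_succ_bot h1 (fun t => dAfter b (t+1)), hj1, Finset.Ico_self]
      simp

def Fb : List Bool → ℕ
  | [] => 0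
  | true :: l => l.count false + Fb l
  | false :: l => Fb l

def Rb : List Bool → ℕ
  | [] => 0
  | x :: l => (if x then l.length else 0) + Rb l

lemma sum_dAfter (b : List Bool) :
    ∑ t ∈ Finset.range (b.count true), dAfter b (t+1) = Fb b := by
  induction b with
  | nil => simp [Fb]
  | cons x l ih =>
    cases x with
    | false => simpa [List.count_cons, dAfter, Fb] using ih
    | true =>
      rw [List.count_cons_self, Finset.sum_range_succ']
      have h1 : ∀ t, dAfter (true :: l) (t + 1 + 1) = dAfter l (t+1) := by
        intro t; simp [dAfter]
      have h0 : dAfter (true :: l) (0+1) = l.count false := by simp [dAfter]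
      simp only [h1, h0, Fb]
      rw [ih]; omega

lemma Fb_Rb (b : List Bool) :
    Fb b + ∑ t ∈ Finset.range (b.count true), t = Rb b := by
  induction b with
  | nil => simp [Fb, Rb]
  | cons x l ih =>
    cases x with
    | false => simpa [List.count_cons, Fb, Rb] using ih
    | true =>
      rw [List.count_cons_self, Finset.sum_range_succ]
      have := count_true_add_count_false l
      simp only [Fb, Rb, if_pos]
      omega

lemma bounce_toWord (b : List Bool) (hb : 1 ≤ b.count true) :
    bounce (toWord b) = Rb b := by
  rw [bounce]
  simp only [filter_toWord, cntE_neWord]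
  rw [if_neg (by omega)]
  have hlen : b.count true ≤ (toWord b).length := by
    calc b.count true ≤ b.length := List.count_le_length
    _ ≤ (toWord b).length := length_toWord b
  rw [bounceAux_toWord b _ 0 (by omega) (by omega)]
  have h2 : ∑ t ∈ Finset.Ico (0+1) (b.count true), (b.count true - t) =
      ∑ t ∈ Finset.range (b.count true), t := by
    set k := b.count true with hk
    rw [Finset.sum_Ico_eq_sum_range]
    rcases Nat.eq_or_lt_of_le hb with h1 | h1
    · rw [← h1]; simp
    · have e1 : ∑ i ∈ Finset.range (k-1), (k - (1+i)) =
          ∑ i ∈ Finset.range (k-1), ((k-1) - i) := by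
        apply Finset.sum_congr rfl; intro i hi; simp at hi; omega
      have e2 : ∑ i ∈ Finset.range (k-1), ((k-1) - i) =
          ∑ i ∈ Finset.range (k-1), (((k-1) - 1 - i) + 1) := by
        apply Finset.sum_congr rfl; intro i hi; simp at hi; omega
      have e3 : ∑ i ∈ Finset.range (k-1), ((k-1) - 1 - i) =
          ∑ i ∈ Finset.range (k-1), i := Finset.sum_range_reflect (fun i => i) (k-1)
      have e4 := Finset.sum_range_succ (fun i => i) (k-1)
      have hk1 : k - 1 + 1 = k := by omega
      rw [hk1] at e4
      rw [e1, e2, Finset.sum_add_distrib, e3, e4]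
      simp
  rw [h2]
  have h1 : Finset.Ico 0 (b.count true) = Finset.range (b.count true) := by
    ext t; simp
  rw [h1, sum_dAfter, Fb_Rb]

/-! ### encoding by descent sets -/

def fS (n : ℕ) (S : Finset ℕ) (j : ℕ) : Bool := decide (j = n - 1 ∨ n - 1 - j ∈ S)

def bS (n : ℕ) (S : Finset ℕ) : List Bool := (List.range n).map (fS n S)

lemma blocks_flatten (f : ℕ → Bool) : ∀ L : List ℕ,
    (L.map fun j => if f j then [N,E] else [D]).flatten = toWord (L.map f)
  | [] => rfl
  | j :: L => by cases hf : f j <;> simp [hf, blocks_flatten f L]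

lemma Mmap_eq (n d : ℕ) (τ : HookSYT n d) : Mmap n d τ = toWord (bS n (Des τ)) := by
  rw [Mmap, bS, ← blocks_flatten]
  congr 1
  apply List.map_congr_left
  intro j _
  by_cases h1 : j = n - 1
  · simp [fS, h1]
  · by_cases h2 : (n - 1 - j) ∈ Des τ <;> simp [fS, h1, h2]

lemma Rb_map_range : ∀ (n : ℕ) (f : ℕ → Bool), Rb ((List.range n).map f) =
    ∑ j ∈ Finset.range n, (if f j then n - 1 - j else 0) := by
  intro n
  induction n with
  | zero => intro f; simp [Rb]
  | succ n ih =>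
    intro f
    rw [List.range_succ_eq_map, List.map_cons, List.map_map, Rb]
    rw [ih (f ∘ Nat.succ), Finset.sum_range_succ']
    have hc : ∀ j, (if (f ∘ Nat.succ) j then n - 1 - j else 0) =
        (if f (j+1) then (n+1) - 1 - (j+1) else 0) := by
      intro j
      have : n - 1 - j = (n+1) - 1 - (j+1) := by omega
      simp [Function.comp, Nat.succ_eq_add_one, this]
    rw [Finset.sum_congr rfl (fun j _ => hc j)]
    simp
    omega

lemma sum_bS (n : ℕ) (S : Finset ℕ) (hS : S ⊆ Finset.Icc 1 (n-1)) (hn : 1 ≤ n) :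
    Rb (bS n S) = ∑ i ∈ S, i := by
  rw [bS, Rb_map_range]
  have h1 : ∑ j ∈ Finset.range n, (if fS n S j then n - 1 - j else 0)
      = ∑ j ∈ Finset.range n, (if fS n S (n-1-j) then n - 1 - (n-1-j) else 0) :=
    (Finset.sum_range_reflect (fun j => if fS n S j then n-1-j else 0) n).symm
  rw [h1]
  have h2 : ∀ j ∈ Finset.range n,
      (if fS n S (n-1-j) then n-1-(n-1-j) else 0) = (if j ∈ S then j else 0) := by
    intro j hj
    simp only [Finset.mem_range] at hj
    have hj' : n - 1 - (n-1-j) = j := by omega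
    rw [hj']
    rcases Nat.eq_zero_or_pos j with rfl | hjpos
    · have h0 : (0:ℕ) ∉ S := fun h => by have := Finset.mem_Icc.mp (hS h); omega
      simp [h0]
    · have hne : n - 1 - j ≠ n - 1 := by omega
      by_cases hmem : j ∈ S
      · simp [fS, hne, hj', hmem]
      · simp [fS, hne, hj', hmem]
  rw [Finset.sum_congr rfl h2, Finset.sum_ite_mem]
  congr 1
  apply Finset.inter_eq_right.mpr
  intro i hi
  have := Finset.mem_Icc.mp (hS hi)
  simp only [Finset.mem_range]; omega

lemma count_map_range (f : ℕ → Bool) : ∀ n, ((List.range n).map f).count true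
    = ((Finset.range n).filter (fun j => f j = true)).card := by
  intro n; induction n with
  | zero => simp
  | succ n ih =>
    rw [List.range_succ, List.map_append, List.count_append, Finset.range_add_one,
      Finset.filter_insert]
    by_cases hf : f n = true
    · rw [if_pos hf, Finset.card_insert_of_notMem (by simp)]
      simp [ih, hf]
    · rw [if_neg hf]
      simp [ih, hf]

lemma filter_fS (n : ℕ) (S : Finset ℕ) (hS : S ⊆ Finset.Icc 1 (n-1)) (hn : 1 ≤ n) :
    (Finset.range n).filter (fun j => fS n S j = true)
      = insert (n-1) (S.image (fun i => n-1-i)) := by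
  ext j
  simp only [Finset.mem_filter, Finset.mem_range, Finset.mem_insert, Finset.mem_image, fS,
    decide_eq_true_eq]
  constructor
  · rintro ⟨hj, h | h⟩
    · exact Or.inl h
    · exact Or.inr ⟨n-1-j, h, by omega⟩
  · rintro (rfl | ⟨i, hi, rfl⟩)
    · exact ⟨by omega, Or.inl rfl⟩
    · have hin := Finset.mem_Icc.mp (hS hi)
      refine ⟨by omega, Or.inr ?_⟩
      have hii : n-1-(n-1-i) = i := by omega
      rw [hii]; exact hi

lemma count_true_bS (n : ℕ) (S : Finset ℕ) (hS : S ⊆ Finset.Icc 1 (n-1)) (hn : 1 ≤ n) :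
    (bS n S).count true = S.card + 1 := by
  rw [bS, count_map_range, filter_fS n S hS hn]
  have hnm : (n-1) ∉ S.image (fun i => n-1-i) := by
    simp only [Finset.mem_image, not_exists]
    rintro i ⟨hi, hie⟩
    have := Finset.mem_Icc.mp (hS hi)
    omega
  rw [Finset.card_insert_of_notMem hnm, Finset.card_image_of_injOn]
  intro i hi i' hi' he
  have h1 := Finset.mem_Icc.mp (hS hi)
  have h2 := Finset.mem_Icc.mp (hS hi')
  simp only at he
  omega

lemma length_bS (n : ℕ) (S : Finset ℕ) : (bS n S).length = n := by simp [bS]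

lemma count_false_bS (n : ℕ) (S : Finset ℕ) (hS : S ⊆ Finset.Icc 1 (n-1)) (hn : 1 ≤ n) :
    (bS n S).count false = n - S.card - 1 := by
  have h1 := count_true_add_count_false (bS n S)
  rw [count_true_bS n S hS hn, length_bS] at h1
  omega

lemma bS_eq_concat (n : ℕ) (S : Finset ℕ) (hn : 1 ≤ n) :
    bS n S = ((List.range (n-1)).map (fS n S)) ++ [true] := by
  have h : List.range n = List.range (n-1) ++ [n-1] := by
    conv_lhs => rw [show n = (n-1)+1 by omega]
    rw [List.range_succ]
  rw [bS, h, List.map_append]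
  simp [fS]

/-! ### structure of hook tableaux -/

lemma mem_hookCells (n d : ℕ) (x : ℕ × ℕ) : x ∈ hookCells n d ↔
    (x.1 = 0 ∧ x.2 < d) ∨ (x.2 = 0 ∧ x.1 < n - d + 1) := by
  obtain ⟨a, b⟩ := x
  rw [hookCells]
  simp only [Finset.mem_union, Finset.mem_image, Finset.mem_range, Prod.mk.injEq]
  constructor
  · rintro (⟨c, hc, rfl, rfl⟩ | ⟨r, hr, rfl, rfl⟩)
    · exact Or.inl ⟨rfl, hc⟩
    · exact Or.inr ⟨rfl, hr⟩
  · rintro (⟨rfl, h2⟩ | ⟨rfl, h2⟩)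
    · exact Or.inl ⟨b, h2, rfl, rfl⟩
    · exact Or.inr ⟨a, h2, rfl, rfl⟩

lemma card_hookCells (n d : ℕ) (hd : 1 ≤ d) (hdn : d ≤ n) : (hookCells n d).card = n := by
  rw [hookCells]
  have hA : ((Finset.range d).image fun c => ((0:ℕ), c)).card = d := by
    rw [Finset.card_image_of_injective _ (fun a b h => by simpa using h), Finset.card_range]
  have hB : ((Finset.range (n-d+1)).image fun r => (r, (0:ℕ))).card = n - d + 1 := by
    rw [Finset.card_image_of_injective _ (fun a b h => by simpa using h), Finset.card_range]
  have hI : ((Finset.range d).image fun c => ((0:ℕ), c)) ∩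
      ((Finset.range (n-d+1)).image fun r => (r, (0:ℕ))) = {((0:ℕ), (0:ℕ))} := by
    ext ⟨a, b⟩
    simp only [Finset.mem_inter, Finset.mem_image, Finset.mem_range, Prod.mk.injEq,
      Finset.mem_singleton]
    constructor
    · rintro ⟨⟨c, hc, rfl, rfl⟩, ⟨r, hr, hr1, hr2⟩⟩
      exact ⟨rfl, hr2.symm⟩
    · rintro ⟨rfl, rfl⟩
      exact ⟨⟨0, by omega, rfl, rfl⟩, ⟨0, by omega, rfl, rfl⟩⟩
  have := Finset.card_union_add_card_inter
    ((Finset.range d).image fun c => ((0:ℕ), c))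
    ((Finset.range (n-d+1)).image fun r => (r, (0:ℕ)))
  rw [hA, hB, hI] at this
  simp only [Finset.card_singleton] at this
  omega

lemma pos_surj {n d : ℕ} (hd : 1 ≤ d) (hdn : d ≤ n) (τ : HookSYT n d) :
    ∀ x ∈ hookCells n d, ∃ k, τ.pos k = x := by
  have himg : Finset.univ.image τ.pos = hookCells n d := by
    apply Finset.eq_of_subset_of_card_le
    · intro x hx
      simp only [Finset.mem_image] at hx
      obtain ⟨k, _, rfl⟩ := hx
      exact τ.mem k
    · rw [Finset.card_image_of_injective _ τ.inj, Finset.card_univ, Fintype.card_fin,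
        card_hookCells n d hd hdn]
  intro x hx
  rw [← himg, Finset.mem_image] at hx
  obtain ⟨k, _, hk⟩ := hx
  exact ⟨k, hk⟩

lemma row_eq {n d : ℕ} (hd : 1 ≤ d) (hdn : d ≤ n) (τ : HookSYT n d) (k : Fin n)
    (hcol : (τ.pos k).2 = 0) :
    (τ.pos k).1 = (Finset.univ.filter (fun m : Fin n => m < k ∧ (τ.pos m).2 = 0)).card := by
  set r := (τ.pos k).1 with hrdef
  set T := Finset.univ.filter (fun m : Fin n => m < k ∧ (τ.pos m).2 = 0) with hT
  have himg : T.image (fun m => (τ.pos m).1) = Finset.range r := by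
    ext t
    simp only [hT, Finset.mem_image, Finset.mem_filter, Finset.mem_univ, true_and,
      Finset.mem_range]
    constructor
    · rintro ⟨m, ⟨hmk, hm0⟩, rfl⟩
      rcases lt_trichotomy ((τ.pos m).1) r with h | h | h
      · exact h
      · exfalso
        have hpe : τ.pos m = τ.pos k := Prod.ext h (by rw [hm0, hcol])
        have := τ.inj hpe
        subst this
        exact lt_irrefl _ hmk
      · exfalso
        have := τ.colInc k m (by rw [hcol, hm0]) h
        exact lt_irrefl _ (lt_trans hmk this)
    · intro ht
      have hr : r < n - d + 1 := by
        have hmem := τ.mem k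
        rw [mem_hookCells] at hmem
        rcases hmem with ⟨h1, _⟩ | ⟨_, h2⟩
        · omega
        · exact h2
      have hcell : (t, (0:ℕ)) ∈ hookCells n d := by
        rw [mem_hookCells]; right; exact ⟨rfl, by omega⟩
      obtain ⟨m, hm⟩ := pos_surj hd hdn τ _ hcell
      have hm1 : (τ.pos m).1 = t := by rw [hm]
      have hm2 : (τ.pos m).2 = 0 := by rw [hm]
      have hmk : m < k := τ.colInc m k (by rw [hm2, hcol]) (by rw [hm1]; exact ht)
      exact ⟨m, ⟨hmk, hm2⟩, hm1⟩
  have hinj : Set.InjOn (fun m => (τ.pos m).1) T := by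
    intro a ha b hb hab
    simp only [hT, Finset.coe_filter, Set.mem_setOf_eq, Finset.mem_univ, true_and] at ha hb
    exact τ.inj (Prod.ext hab (by rw [ha.2, hb.2]))
  calc r = (Finset.range r).card := (Finset.card_range r).symm
  _ = (T.image (fun m => (τ.pos m).1)).card := by rw [himg]
  _ = T.card := Finset.card_image_of_injOn hinj

lemma col_eq {n d : ℕ} (hd : 1 ≤ d) (hdn : d ≤ n) (τ : HookSYT n d) (k : Fin n)
    (hrow : (τ.pos k).1 = 0) :
    (τ.pos k).2 = (Finset.univ.filter (fun m : Fin n => m < k ∧ (τ.pos m).1 = 0)).card := by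
  set r := (τ.pos k).2 with hrdef
  set T := Finset.univ.filter (fun m : Fin n => m < k ∧ (τ.pos m).1 = 0) with hT
  have himg : T.image (fun m => (τ.pos m).2) = Finset.range r := by
    ext t
    simp only [hT, Finset.mem_image, Finset.mem_filter, Finset.mem_univ, true_and,
      Finset.mem_range]
    constructor
    · rintro ⟨m, ⟨hmk, hm0⟩, rfl⟩
      rcases lt_trichotomy ((τ.pos m).2) r with h | h | h
      · exact h
      · exfalso
        have hpe : τ.pos m = τ.pos k := Prod.ext (by rw [hm0, hrow]) h
        have := τ.inj hpe
        subst this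
        exact lt_irrefl _ hmk
      · exfalso
        have := τ.rowInc k m (by rw [hrow, hm0]) h
        exact lt_irrefl _ (lt_trans hmk this)
    · intro ht
      have hr : r < d := by
        have hmem := τ.mem k
        rw [mem_hookCells] at hmem
        rcases hmem with ⟨_, h2⟩ | ⟨h1, _⟩
        · exact h2
        · omega
      have hcell : ((0:ℕ), t) ∈ hookCells n d := by
        rw [mem_hookCells]; left; exact ⟨rfl, by omega⟩
      obtain ⟨m, hm⟩ := pos_surj hd hdn τ _ hcell
      have hm1 : (τ.pos m).2 = t := by rw [hm]
      have hm2 : (τ.pos m).1 = 0 := by rw [hm]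
      have hmk : m < k := τ.rowInc m k (by rw [hm2, hrow]) (by rw [hm1]; exact ht)
      exact ⟨m, ⟨hmk, hm2⟩, hm1⟩
  have hinj : Set.InjOn (fun m => (τ.pos m).2) T := by
    intro a ha b hb hab
    simp only [hT, Finset.coe_filter, Set.mem_setOf_eq, Finset.mem_univ, true_and] at ha hb
    exact τ.inj (Prod.ext (by rw [ha.2, hb.2]) hab)
  calc r = (Finset.range r).card := (Finset.card_range r).symm
  _ = (T.image (fun m => (τ.pos m).2)).card := by rw [himg]
  _ = T.card := Finset.card_image_of_injOn hinj

lemma row_zero {n d : ℕ} (hd : 1 ≤ d) (hdn : d ≤ n) (τ : HookSYT n d) (k : Fin n)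
    (hk : (k : ℕ) = 0) : (τ.pos k).1 = 0 := by
  by_cases hcol : (τ.pos k).2 = 0
  · rw [row_eq hd hdn τ k hcol]
    convert Finset.card_empty
    apply Finset.filter_false_of_mem
    intro m _
    intro hcon
    have := hcon.1
    simp only [Fin.lt_def, hk] at this
    omega
  · have hmem := τ.mem k
    rw [mem_hookCells] at hmem
    rcases hmem with ⟨h1, _⟩ | ⟨h1, _⟩
    · exact h1
    · exact absurd h1 hcol

lemma des_char {n d : ℕ} (hd : 1 ≤ d) (hdn : d ≤ n) (τ : HookSYT n d) (k : ℕ) (hk : k < n) :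
    k ∈ Des τ ↔ 1 ≤ (τ.pos ⟨k, hk⟩).1 := by
  constructor
  · intro h
    rw [Des, Finset.mem_filter] at h
    obtain ⟨hicc, hi, hi', hlt⟩ := h
    have he : τ.pos ⟨k, hi⟩ = τ.pos ⟨k, hk⟩ := rfl
    rw [he] at hlt
    omega
  · intro h
    have hk1 : 1 ≤ k := by
      by_contra hcon
      have : (k : ℕ) = 0 := by omega
      have := row_zero hd hdn τ ⟨k, hk⟩ this
      omega
    have hcol : (τ.pos ⟨k, hk⟩).2 = 0 := by
      have hmem := τ.mem ⟨k, hk⟩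
      rw [mem_hookCells] at hmem
      rcases hmem with ⟨h1, _⟩ | ⟨h1, _⟩
      · omega
      · exact h1
    have hk' : k - 1 < n := by omega
    rw [Des, Finset.mem_filter, Finset.mem_Icc]
    refine ⟨⟨hk1, by omega⟩, hk, hk', ?_⟩
    by_contra hcon
    push_neg at hcon
    have hge : (τ.pos ⟨k, hk⟩).1 ≤ (τ.pos ⟨k - 1, hk'⟩).1 := hcon
    have hrow1 : 1 ≤ (τ.pos ⟨k - 1, hk'⟩).1 := by omega
    have hcol1 : (τ.pos ⟨k - 1, hk'⟩).2 = 0 := by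
      have hmem := τ.mem ⟨k - 1, hk'⟩
      rw [mem_hookCells] at hmem
      rcases hmem with ⟨h1, _⟩ | ⟨h1, _⟩
      · omega
      · exact h1
    rcases Nat.eq_or_lt_of_le hge with heq | hlt
    · have hpe : τ.pos ⟨k, hk⟩ = τ.pos ⟨k - 1, hk'⟩ := Prod.ext heq (by rw [hcol, hcol1])
      have := τ.inj hpe
      simp only [Fin.mk.injEq] at this
      omega
    · have := τ.colInc ⟨k, hk⟩ ⟨k - 1, hk'⟩ (by rw [hcol, hcol1]) hlt
      simp only [Fin.lt_def] at this
      omega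

lemma des_char' {n d : ℕ} (hd : 1 ≤ d) (hdn : d ≤ n) (τ : HookSYT n d) (k : Fin n) :
    (k : ℕ) ∈ Des τ ↔ 1 ≤ (τ.pos k).1 := by
  rw [des_char hd hdn τ k k.isLt]

lemma Des_subset {n d : ℕ} (τ : HookSYT n d) : Des τ ⊆ Finset.Icc 1 (n-1) :=
  Finset.filter_subset _ _

lemma card_Des {n d : ℕ} (hd : 1 ≤ d) (hdn : d ≤ n) (τ : HookSYT n d) :
    (Des τ).card = n - d := by
  have himg : Des τ = (Finset.univ.filter (fun k : Fin n => 1 ≤ (τ.pos k).1)).image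
      Fin.val := by
    ext i
    simp only [Finset.mem_image, Finset.mem_filter, Finset.mem_univ, true_and]
    constructor
    · intro hi
      have hicc := Finset.mem_Icc.mp (Des_subset τ hi)
      have hin : i < n := by omega
      exact ⟨⟨i, hin⟩, (des_char hd hdn τ i hin).mp hi, rfl⟩
    · rintro ⟨k, hk, rfl⟩
      exact (des_char hd hdn τ k k.isLt).mpr hk
  rw [himg, Finset.card_image_of_injective _ Fin.val_injective]
  have hcard2 : (Finset.univ.filter (fun k : Fin n => 1 ≤ (τ.pos k).1)).card
      = ((hookCells n d).filter (fun x => 1 ≤ x.1)).card := by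
    apply Finset.card_bij (fun k _ => τ.pos k)
    · intro k hk
      simp only [Finset.mem_filter, Finset.mem_univ, true_and] at hk ⊢
      exact ⟨τ.mem k, hk⟩
    · intro a ha b hb hab
      exact τ.inj hab
    · intro x hx
      simp only [Finset.mem_filter] at hx
      obtain ⟨k, hk⟩ := pos_surj hd hdn τ x hx.1
      refine ⟨k, ?_, hk⟩
      simp only [Finset.mem_filter, Finset.mem_univ, true_and]
      rw [hk]; exact hx.2
  rw [hcard2]
  have hsplit := Finset.card_filter_add_card_filter_not
    (s := hookCells n d) (p := fun x => 1 ≤ x.1)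
  have hzero : ((hookCells n d).filter (fun x => ¬ 1 ≤ x.1)).card = d := by
    have : (hookCells n d).filter (fun x => ¬ 1 ≤ x.1)
        = (Finset.range d).image (fun c => ((0:ℕ), c)) := by
      ext ⟨a, b⟩
      simp only [Finset.mem_filter, mem_hookCells, Finset.mem_image, Finset.mem_range,
        Prod.mk.injEq, not_le]
      constructor
      · rintro ⟨h1 | h2, h3⟩
        · exact ⟨b, h1.2, by omega, rfl⟩
        · exact ⟨b, by omega, by omega, rfl⟩
      · rintro ⟨c, hc, rfl, rfl⟩
        exact ⟨Or.inl ⟨rfl, hc⟩, by omega⟩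
    rw [this, Finset.card_image_of_injective _ (fun a b h => by simpa using h),
      Finset.card_range]
  rw [hzero, card_hookCells n d hd hdn] at hsplit
  omega

lemma Des_determines {n d : ℕ} (hd : 1 ≤ d) (hdn : d ≤ n) (τ₁ τ₂ : HookSYT n d)
    (hdes : Des τ₁ = Des τ₂) : τ₁ = τ₂ := by
  have H2 : ∀ (N : ℕ) (k : Fin n), (k : ℕ) < N → τ₁.pos k = τ₂.pos k := by
    intro N
    induction N with
    | zero => intro k hk; omega
    | succ N ihN =>
    intro k _hkN
    have ih : ∀ m : Fin n, m < k → τ₁.pos m = τ₂.pos m := fun m hm =>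
      ihN m (by rw [Fin.lt_def] at hm; omega)
    by_cases hk0 : (k : ℕ) = 0
    · have h1 := row_zero hd hdn τ₁ k hk0
      have h2 := row_zero hd hdn τ₂ k hk0
      have hc1 := col_eq hd hdn τ₁ k h1
      have hc2 := col_eq hd hdn τ₂ k h2
      have hempty : ∀ (f : Fin n → ℕ × ℕ),
          Finset.univ.filter (fun m : Fin n => m < k ∧ (f m).1 = 0) = ∅ := by
        intro f
        apply Finset.filter_false_of_mem
        intro m _ hcon
        have := hcon.1
        simp only [Fin.lt_def, hk0] at this
        omega
      rw [hempty] at hc1 hc2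
      apply Prod.ext <;> simp_all
    · have hfilt : ∀ (p : Fin n → Prop) [DecidablePred p] (q : Fin n → Prop) [DecidablePred q],
        (∀ m : Fin n, m < k → (p m ↔ q m)) →
        (Finset.univ.filter (fun m : Fin n => m < k ∧ p m)).card =
        (Finset.univ.filter (fun m : Fin n => m < k ∧ q m)).card := by
        intro p _ q _ hpq
        congr 1
        apply Finset.filter_congr
        intro m _
        constructor
        · rintro ⟨h1, h2⟩; exact ⟨h1, (hpq m h1).mp h2⟩
        · rintro ⟨h1, h2⟩; exact ⟨h1, (hpq m h1).mpr h2⟩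
      by_cases hrow : 1 ≤ (τ₁.pos k).1
      · have hrow2 : 1 ≤ (τ₂.pos k).1 := by
          have h1 := (des_char' hd hdn τ₁ k).mpr hrow
          rw [hdes] at h1
          exact (des_char' hd hdn τ₂ k).mp h1
        have hcol1 : (τ₁.pos k).2 = 0 := by
          have hmem := τ₁.mem k
          rw [mem_hookCells] at hmem
          rcases hmem with ⟨h1, _⟩ | ⟨h1, _⟩ <;> omega
        have hcol2 : (τ₂.pos k).2 = 0 := by
          have hmem := τ₂.mem k
          rw [mem_hookCells] at hmem
          rcases hmem with ⟨h1, _⟩ | ⟨h1, _⟩ <;> omega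
        have hr1 := row_eq hd hdn τ₁ k hcol1
        have hr2 := row_eq hd hdn τ₂ k hcol2
        have := hfilt (fun m => (τ₁.pos m).2 = 0) (fun m => (τ₂.pos m).2 = 0)
          (fun m hm => by simp only [ih m hm])
        apply Prod.ext
        · rw [hr1, hr2, this]
        · rw [hcol1, hcol2]
      · have hrow2 : ¬ 1 ≤ (τ₂.pos k).1 := by
          intro hcon
          have h1 := (des_char' hd hdn τ₂ k).mpr hcon
          rw [← hdes] at h1
          have := (des_char' hd hdn τ₁ k).mp h1
          omega
        have h1 : (τ₁.pos k).1 = 0 := by omega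
        have h2 : (τ₂.pos k).1 = 0 := by omega
        have hc1 := col_eq hd hdn τ₁ k h1
        have hc2 := col_eq hd hdn τ₂ k h2
        have := hfilt (fun m => (τ₁.pos m).1 = 0) (fun m => (τ₂.pos m).1 = 0)
          (fun m hm => by simp only [ih m hm])
        apply Prod.ext
        · rw [h1, h2]
        · rw [hc1, hc2, this]
  have H : ∀ k : Fin n, τ₁.pos k = τ₂.pos k := fun k => H2 ((k : ℕ) + 1) k (by omega)
  have hpos : τ₁.pos = τ₂.pos := funext H
  cases τ₁
  cases τ₂
  simp only at hpos
  subst hpos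
  rfl

/-! ### construction of a hook tableau with given descent set -/

def rankS (S : Finset ℕ) (k : ℕ) : ℕ := (S.filter (· < k)).card

def arankS (S : Finset ℕ) (k : ℕ) : ℕ := ((Finset.range k).filter (· ∉ S)).card

def posS (S : Finset ℕ) (k : ℕ) : ℕ × ℕ :=
  if k ∈ S then (1 + rankS S k, 0) else (0, arankS S k)

lemma rankS_mono (S : Finset ℕ) {k k' : ℕ} (h : k ≤ k') : rankS S k ≤ rankS S k' := by
  apply Finset.card_le_card
  intro x hx
  simp only [Finset.mem_filter] at hx ⊢
  exact ⟨hx.1, by omega⟩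

lemma rankS_strict (S : Finset ℕ) {k k' : ℕ} (hk : k ∈ S) (h : k < k') :
    rankS S k < rankS S k' := by
  apply Finset.card_lt_card
  rw [Finset.ssubset_iff_of_subset]
  · exact ⟨k, by simp only [Finset.mem_filter]; exact ⟨hk, h⟩,
      by simp only [Finset.mem_filter]; omega⟩
  · intro x hx
    simp only [Finset.mem_filter] at hx ⊢
    exact ⟨hx.1, by omega⟩

lemma arankS_mono (S : Finset ℕ) {k k' : ℕ} (h : k ≤ k') : arankS S k ≤ arankS S k' := by
  apply Finset.card_le_card
  intro x hx
  simp only [Finset.mem_filter, Finset.mem_range] at hx ⊢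
  exact ⟨by omega, hx.2⟩

lemma arankS_strict (S : Finset ℕ) {k k' : ℕ} (hk : k ∉ S) (h : k < k') :
    arankS S k < arankS S k' := by
  apply Finset.card_lt_card
  rw [Finset.ssubset_iff_of_subset]
  · exact ⟨k, by simp only [Finset.mem_filter, Finset.mem_range]; exact ⟨h, hk⟩,
      by simp only [Finset.mem_filter, Finset.mem_range]; omega⟩
  · intro x hx
    simp only [Finset.mem_filter, Finset.mem_range] at hx ⊢
    exact ⟨by omega, hx.2⟩

lemma rankS_lt_card (S : Finset ℕ) {k : ℕ} (hk : k ∈ S) : rankS S k < S.card := by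
  apply Finset.card_lt_card
  rw [Finset.ssubset_iff_of_subset (Finset.filter_subset _ _)]
  exact ⟨k, hk, by simp only [Finset.mem_filter]; omega⟩

lemma arankS_lt (S : Finset ℕ) (n : ℕ) (hSr : S ⊆ Finset.range n) {k : ℕ} (hk : k ∉ S)
    (hkn : k < n) : arankS S k < n - S.card := by
  have hcard : ((Finset.range n).filter (· ∉ S)).card = n - S.card := by
    have hsplit := Finset.card_filter_add_card_filter_not
      (s := Finset.range n) (p := fun x => x ∈ S)
    have hmem : (Finset.range n).filter (fun x => x ∈ S) = S := by
      ext x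
      simp only [Finset.mem_filter, Finset.mem_range]
      exact ⟨fun h => h.2, fun h => ⟨by simpa using hSr h, h⟩⟩
    rw [hmem, Finset.card_range] at hsplit
    have : ((Finset.range n).filter (· ∉ S)) = ((Finset.range n).filter (fun x => ¬ x ∈ S)) :=
      rfl
    omega
  have hsub : (Finset.range k).filter (· ∉ S) ⊆ ((Finset.range n).filter (· ∉ S)).erase k := by
    intro x hx
    simp only [Finset.mem_filter, Finset.mem_range, Finset.mem_erase] at hx ⊢
    exact ⟨by omega, by omega, hx.2⟩
  have hkmem : k ∈ (Finset.range n).filter (· ∉ S) := by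
    simp only [Finset.mem_filter, Finset.mem_range]
    exact ⟨hkn, hk⟩
  have := Finset.card_le_card hsub
  rw [Finset.card_erase_of_mem hkmem] at this
  have hpos : 1 ≤ ((Finset.range n).filter (· ∉ S)).card := by
    apply Finset.card_pos.mpr
    exact ⟨k, hkmem⟩
  rw [hcard] at this hpos
  rw [arankS]
  omega

lemma posS_mem {S : Finset ℕ} {k : ℕ} (h : k ∈ S) : posS S k = (1 + rankS S k, 0) :=
  if_pos h

lemma posS_not_mem {S : Finset ℕ} {k : ℕ} (h : k ∉ S) : posS S k = (0, arankS S k) :=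
  if_neg h

lemma exists_tau (n d : ℕ) (hd : 1 ≤ d) (hdn : d ≤ n) (S : Finset ℕ)
    (hS : S ⊆ Finset.Icc 1 (n-1)) (hcard : S.card = n - d) :
    ∃ τ : HookSYT n d, Des τ = S := by
  have hn : 1 ≤ n := le_trans hd hdn
  have hSr : S ⊆ Finset.range n := by
    intro i hi
    have := Finset.mem_Icc.mp (hS hi)
    simp only [Finset.mem_range]
    omega
  have h0S : (0 : ℕ) ∉ S := fun h => by have := Finset.mem_Icc.mp (hS h); omega
  refine ⟨⟨fun k => posS S (k : ℕ), ?_, ?_, ?_, ?_⟩, ?_⟩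
  · -- mem
    intro k
    show posS S (k : ℕ) ∈ hookCells n d
    rw [mem_hookCells]
    by_cases hk : (k : ℕ) ∈ S
    · rw [posS_mem hk]
      right
      refine ⟨rfl, ?_⟩
      have := rankS_lt_card S hk
      omega
    · rw [posS_not_mem hk]
      left
      refine ⟨rfl, ?_⟩
      have := arankS_lt S n hSr hk k.isLt
      omega
  · -- inj
    intro a b hab'
    have hab : posS S (a : ℕ) = posS S (b : ℕ) := hab'
    by_cases ha : (a : ℕ) ∈ S <;> by_cases hb : (b : ℕ) ∈ S
    · rw [posS_mem ha, posS_mem hb, Prod.mk.injEq] at hab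
      have : (a : ℕ) = (b : ℕ) := by
        rcases lt_trichotomy (a : ℕ) (b : ℕ) with h | h | h
        · have := rankS_strict S ha h; omega
        · exact h
        · have := rankS_strict S hb h; omega
      exact Fin.ext this
    · rw [posS_mem ha, posS_not_mem hb, Prod.mk.injEq] at hab
      omega
    · rw [posS_not_mem ha, posS_mem hb, Prod.mk.injEq] at hab
      omega
    · rw [posS_not_mem ha, posS_not_mem hb, Prod.mk.injEq] at hab
      have : (a : ℕ) = (b : ℕ) := by
        rcases lt_trichotomy (a : ℕ) (b : ℕ) with h | h | h
        · have := arankS_strict S ha h; omega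
        · exact h
        · have := arankS_strict S hb h; omega
      exact Fin.ext this
  · -- rowInc
    intro i j hrow' hcol'
    have hrow : (posS S (i : ℕ)).1 = (posS S (j : ℕ)).1 := hrow'
    have hcol : (posS S (i : ℕ)).2 < (posS S (j : ℕ)).2 := hcol'
    clear hrow' hcol'
    by_cases hi : (i : ℕ) ∈ S <;> by_cases hj : (j : ℕ) ∈ S
    · rw [posS_mem hi, posS_mem hj] at hrow hcol
      simp at hcol
    · rw [posS_mem hi, posS_not_mem hj] at hrow
      simp at hrow
    · rw [posS_not_mem hi, posS_mem hj] at hrow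
      simp only at hrow
      omega
    · rw [posS_not_mem hi, posS_not_mem hj] at hcol
      simp only at hcol
      rw [Fin.lt_def]
      by_contra hcon
      push_neg at hcon
      have := arankS_mono S hcon
      omega
  · -- colInc
    intro i j hcol' hrow'
    have hrow : (posS S (i : ℕ)).1 < (posS S (j : ℕ)).1 := hrow'
    have hcol : (posS S (i : ℕ)).2 = (posS S (j : ℕ)).2 := hcol'
    clear hrow' hcol'
    by_cases hi : (i : ℕ) ∈ S <;> by_cases hj : (j : ℕ) ∈ S
    · rw [posS_mem hi, posS_mem hj] at hrow
      simp only at hrow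
      rw [Fin.lt_def]
      by_contra hcon
      push_neg at hcon
      have := rankS_mono S hcon
      omega
    · rw [posS_mem hi, posS_not_mem hj] at hrow
      simp only at hrow
      omega
    · -- i ∉ S, j ∈ S : arankS S i = 0, so i = 0
      rw [posS_not_mem hi, posS_mem hj] at hcol
      simp only at hcol
      have hi0 : (i : ℕ) = 0 := by
        by_contra hcon
        have h0 : (0:ℕ) ∈ (Finset.range (i:ℕ)).filter (· ∉ S) := by
          simp only [Finset.mem_filter, Finset.mem_range]
          exact ⟨by omega, h0S⟩
        have h1 : 1 ≤ arankS S (i : ℕ) := Finset.card_pos.mpr ⟨0, h0⟩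
        omega
      have hj1 : 1 ≤ (j : ℕ) := by
        have := Finset.mem_Icc.mp (hS hj)
        omega
      rw [Fin.lt_def]
      omega
    · rw [posS_not_mem hi, posS_not_mem hj] at hrow
      simp only at hrow
      omega
  · -- Des = S
    ext i
    rw [Des, Finset.mem_filter]
    constructor
    · rintro ⟨hicc, hi, hi', hlt'⟩
      have hlt : (posS S (i - 1)).1 < (posS S i).1 := hlt'
      by_contra hcon
      rw [posS_not_mem hcon] at hlt
      simp at hlt
    · intro hiS
      have hicc := Finset.mem_Icc.mp (hS hiS)
      have hi : i < n := by omega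
      have hi' : i - 1 < n := by omega
      refine ⟨Finset.mem_Icc.mpr hicc, hi, hi', ?_⟩
      show (posS S (i - 1)).1 < (posS S i).1
      rw [posS_mem hiS]
      by_cases hprev : (i - 1 : ℕ) ∈ S
      · rw [posS_mem hprev]
        have := rankS_strict S hprev (show i - 1 < i by omega)
        simp only
        omega
      · rw [posS_not_mem hprev]
        simp only
        omega

/-! ### assembly lemmas -/

lemma bS_inj_sub (n : ℕ) (S₁ S₂ : Finset ℕ) (hS₁ : S₁ ⊆ Finset.Icc 1 (n-1))
    (h : bS n S₁ = bS n S₂) : S₁ ⊆ S₂ := by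
  intro i hi
  have hicc := Finset.mem_Icc.mp (hS₁ hi)
  have hf := List.map_inj_left.mp h
  have hj : (n-1-i) ∈ List.range n := by
    rw [List.mem_range]; omega
  have heq := hf _ hj
  have hni : n - 1 - (n-1-i) = i := by omega
  have h1 : fS n S₁ (n-1-i) = true := by
    simp only [fS, decide_eq_true_eq]
    right
    rw [hni]; exact hi
  rw [h1] at heq
  have h2 := heq.symm
  simp only [fS, decide_eq_true_eq] at h2
  rcases h2 with h2 | h2
  · omega
  · rwa [hni] at h2

lemma area_toWord (b : List Bool) : area (toWord b) = 0 := areaAux_toWord b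

lemma Mmap_mem_SchT (n d : ℕ) (hd : 1 ≤ d) (hdn : d ≤ n) (τ : HookSYT n d) :
    Mmap n d τ ∈ SchT n (d-1) 0 := by
  have hn : 1 ≤ n := le_trans hd hdn
  have hsub := Des_subset τ
  have hc := card_Des hd hdn τ
  rw [Mmap_eq]
  have hct := count_true_bS n (Des τ) hsub hn
  have hcf := count_false_bS n (Des τ) hsub hn
  simp only [SchT, Set.mem_setOf_eq]
  refine ⟨isSchroeder_toWord _, ?_, ?_, area_toWord _, ?_⟩
  · rw [cntD_toWord, hcf, hc]; omega
  · rw [cntN_toWord, hct, hc]; omega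
  · refine ⟨toWord ((List.range (n-1)).map (fS n (Des τ))), ?_⟩
    rw [bS_eq_concat n (Des τ) hn, toWord_append]
    rfl

lemma mem_SchT_is_Mmap (n d : ℕ) (hd : 1 ≤ d) (hdn : d ≤ n) (g : List Step)
    (hg : g ∈ SchT n (d-1) 0) : ∃ τ : HookSYT n d, Mmap n d τ = g := by
  have hn : 1 ≤ n := le_trans hd hdn
  simp only [SchT, Set.mem_setOf_eq] at hg
  obtain ⟨hsch, hD, hN, harea, u, hu⟩ := hg
  obtain ⟨b, rfl⟩ := exists_toWord_of_schroeder g.length g le_rfl hsch harea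
  have hbt : b.count true = n - d + 1 := by
    have := cntN_toWord b
    omega
  have hbf : b.count false = d - 1 := by
    have := cntD_toWord b
    omega
  have hblen : b.length = n := by
    have := count_true_add_count_false b
    omega
  -- last block is NE
  have hbne : b ≠ [] := by
    intro hcon
    rw [hcon] at hblen
    simp at hblen
    omega
  obtain hnil | ⟨c, x, hcx⟩ := b.eq_nil_or_concat
  · exact absurd hnil hbne
  rw [List.concat_eq_append] at hcx
  have hx : x = true := by
    by_contra hcon
    have hxf : x = false := by
      cases x
      · rfl
      · exact absurd rfl hcon
    rw [hcx, hxf, toWord_append] at hu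
    have h1 : (toWord c ++ toWord [false]).getLast? = some D := by
      rw [show toWord [false] = [D] from rfl]
      exact List.getLast?_concat
    have h2 : (u ++ [N, E]).getLast? = some E := by
      rw [show u ++ [N, E] = (u ++ [N]) ++ [E] by simp]
      exact List.getLast?_concat
    rw [hu] at h1
    rw [h2] at h1
    simp at h1
  subst hx
  subst hcx
  have hclen : c.length = n - 1 := by
    simp at hblen
    omega
  set b : List Bool := c ++ [true] with hbdef
  set S : Finset ℕ := (Finset.Icc 1 (n-1)).filter (fun i => b.getD (n-1-i) false = true)
    with hSdef
  have hSsub : S ⊆ Finset.Icc 1 (n-1) := Finset.filter_subset _ _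
  have hbS : b = bS n S := by
    apply List.ext_getElem
    · rw [hblen, bS, List.length_map, List.length_range]
    · intro j hj1 hj2
      have hjn : j < n := by omega
      have hrhs : (bS n S)[j]'hj2 = fS n S j := by
        simp only [bS, List.getElem_map, List.getElem_range]
      rw [hrhs]
      by_cases hjn1 : j = n - 1
      · subst hjn1
        have hlhs : b[n-1]'hj1 = true :=
          List.getElem_concat_length (l := c) (a := true) (i := n-1) (by omega) hj1
        rw [hlhs]
        simp [fS]
      · have hfS : fS n S j = decide (b.getD j false = true) := by
          simp only [fS, hSdef, Finset.mem_filter, Finset.mem_Icc]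
          have hj' : n - 1 - (n - 1 - j) = j := by omega
          rw [hj']
          have hb1 : (1 ≤ n - 1 - j ∧ n - 1 - j ≤ n - 1) := by omega
          simp [hjn1, hb1.1, hb1.2]
        rw [hfS, List.getD_eq_getElem b false hj1]
        cases hbj : b[j]'hj1 <;> simp [hbj]
  have hScard : S.card = n - d := by
    have := count_true_bS n S hSsub hn
    rw [← hbS] at this
    omega
  obtain ⟨τ, hτ⟩ := exists_tau n d hd hdn S hSsub hScard
  refine ⟨τ, ?_⟩
  rw [Mmap_eq, hτ, ← hbS]
/-- The map `M_{n,d}` is a bijection from `SYT(d, 1^{n-d})` onto the set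
of Schröder paths in an `n×n` grid with `d-1` diagonal steps, area `0`, ending in `NE`,
and satisfies `maj(τ) = bounce(M_{n,d}(τ))`. -/
theorem stmt14 (n d : ℕ) (hd : 1 ≤ d) (hdn : d ≤ n) :
    Function.Injective (Mmap n d) ∧
    Set.range (Mmap n d) = SchT n (d-1) 0 ∧
    ∀ τ : HookSYT n d, majT τ = bounce (Mmap n d τ) := by
  have hn : 1 ≤ n := le_trans hd hdn
  refine ⟨?_, ?_, ?_⟩
  · intro τ₁ τ₂ h
    rw [Mmap_eq, Mmap_eq] at h
    have hb := toWord_inj h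
    have hDes : Des τ₁ = Des τ₂ :=
      Finset.Subset.antisymm (bS_inj_sub n _ _ (Des_subset τ₁) hb)
        (bS_inj_sub n _ _ (Des_subset τ₂) hb.symm)
    exact Des_determines hd hdn τ₁ τ₂ hDes
  · ext g
    constructor
    · rintro ⟨τ, rfl⟩
      exact Mmap_mem_SchT n d hd hdn τ
    · intro hg
      exact mem_SchT_is_Mmap n d hd hdn g hg
  · intro τ
    have hsub := Des_subset τ
    rw [Mmap_eq, bounce_toWord _ (by rw [count_true_bS n _ hsub hn]; omega),
      sum_bS n (Des τ) hsub hn, majT]
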